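/- Let G be a finite abelian group and B : G × G → ℚ/ℤ a ℤ-bilinear pairing that is nondegenerate on both sides (if B(x,y) = 0 for all y then x = 0, and if B(x,y) = 0 for all x then y = 0). Let φ : G → G be an additive endomorphism and u : G → G an additive automorphism such that φ∘u = u∘φ and B(φ(x), y) = B(x, u(φ(y))) for all x, y ∈ G. Then for all positive integers m and n, the annihilator of ker(φ^m) inside ker(φ^n), namely {y ∈ G : φ^n(y) = 0 and B(x,y) = 0 for all x with φ^m(x) = 0}, equals φ^m(ker(φ^{m+n})). -/

import Mathlib

open Function

/-- An injective additive hom from `AddCircle (1:ℚ)` to `AddCircle (1:ℝ)`. -/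
noncomputable def ratCircleToRealCircle : AddCircle (1 : ℚ) →+ AddCircle (1 : ℝ) :=
  QuotientAddGroup.lift (AddSubgroup.zmultiples (1 : ℚ))
    ((QuotientAddGroup.mk' (AddSubgroup.zmultiples (1 : ℝ))).comp
      (Rat.castHom ℝ).toAddMonoidHom)
    (by
      rintro q ⟨n, rfl⟩
      rw [AddMonoidHom.mem_ker]
      simp only [AddMonoidHom.comp_apply, RingHom.toAddMonoidHom_eq_coe,
        AddMonoidHom.coe_coe, QuotientAddGroup.mk'_apply]
      rw [QuotientAddGroup.eq_zero_iff]
      exact ⟨n, by push_cast; simp⟩)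

lemma ratCircleToRealCircle_injective : Function.Injective ratCircleToRealCircle := by
  rw [injective_iff_map_eq_zero]
  intro a ha
  induction a using QuotientAddGroup.induction_on with
  | H q =>
    have : ((q : ℝ) : AddCircle (1 : ℝ)) = 0 := ha
    rw [QuotientAddGroup.eq_zero_iff] at this ⊢
    obtain ⟨n, hn⟩ := this
    refine ⟨n, ?_⟩
    have : (q : ℝ) = (n : ℝ) := by
      rw [← hn]; push_cast; simp [zsmul_eq_mul]
    have hq : q = (n : ℚ) := by exact_mod_cast this
    rw [hq]; simp [zsmul_eq_mul]

/-- The circle as units of `ℂ`. -/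
noncomputable def circleToUnits : Circle →* ℂˣ where
  toFun z := Units.mk0 (z : ℂ) z.coe_ne_zero
  map_one' := by ext; simp
  map_mul' a b := by ext; simp

lemma circleToUnits_injective : Function.Injective circleToUnits := by
  intro a b h
  exact Circle.coe_injective (congrArg Units.val h)

/-- For a finite abelian group `G`, there is an injection from `G →+ AddCircle (1:ℚ)` to `G`. -/
lemma exists_char_injection (G : Type*) [AddCommGroup G] [Finite G] :
    ∃ j : (G →+ AddCircle (1 : ℚ)) → G, Function.Injective j := by
  classical
  have hexp : Monoid.exponent (Multiplicative G) ≠ 0 := Monoid.exponent_ne_zero_of_finite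
  haveI : NeZero ((Monoid.exponent (Multiplicative G) : ℂ)) := ⟨by exact_mod_cast hexp⟩
  obtain ⟨E⟩ := CommGroup.monoidHom_mulEquiv_of_hasEnoughRootsOfUnity (Multiplicative G) ℂ
  let j0 : (G →+ AddCircle (1 : ℚ)) → (Multiplicative G →* ℂˣ) := fun χ =>
    { toFun := fun g => circleToUnits (AddCircle.toCircle (ratCircleToRealCircle (χ g.toAdd)))
      map_one' := by
        simp only [toAdd_one, map_zero, AddCircle.toCircle_zero, map_one]
      map_mul' := fun a b => by
        simp only [toAdd_mul, map_add, AddCircle.toCircle_add, map_mul] }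
  have hj0 : Function.Injective j0 := by
    intro χ χ' h
    ext g
    have := congrArg (fun f : Multiplicative G →* ℂˣ => f (Multiplicative.ofAdd g)) h
    simp only [j0, MonoidHom.coe_mk, OneHom.coe_mk, toAdd_ofAdd] at this
    exact ratCircleToRealCircle_injective
      (AddCircle.injective_toCircle one_ne_zero (circleToUnits_injective this))
  exact ⟨fun χ => (E (j0 χ)).toAdd, fun χ χ' h => hj0 (E.injective (Multiplicative.toAdd.injective h))⟩

/-- Surjectivity of the map induced by a nondegenerate pairing onto the character group. -/
lemma pairing_surjective {G : Type*} [AddCommGroup G] [Finite G]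
    (B : G → G → AddCircle (1 : ℚ))
    (hBl : ∀ x x' y : G, B (x + x') y = B x y + B x' y)
    (hBr : ∀ x y y' : G, B x (y + y') = B x y + B x y')
    (hndl : ∀ x : G, (∀ y : G, B x y = 0) → x = 0)
    (χ : G →+ AddCircle (1 : ℚ)) : ∃ x : G, ∀ y : G, B x y = χ y := by
  classical
  let ι : G → (G →+ AddCircle (1 : ℚ)) := fun x => AddMonoidHom.mk' (fun y => B x y) (hBr x)
  have hι : Function.Injective ι := by
    intro x x' h
    have hxy : ∀ y, B x y = B x' y := fun y =>
      congrArg (fun f : G →+ AddCircle (1 : ℚ) => f y) h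
    have : ∀ y, B (x - x') y = 0 := by
      intro y
      have h1 := hBl (x - x') x' y
      rw [sub_add_cancel, hxy y] at h1
      exact right_eq_add.mp h1
    have := hndl _ this
    exact sub_eq_zero.mp this
  obtain ⟨j, hj⟩ := exists_char_injection G
  have hcomp : Function.Surjective (j ∘ ι) :=
    Finite.surjective_of_injective (hj.comp hι)
  obtain ⟨x, hx⟩ := hcomp (j χ)
  refine ⟨x, fun y => ?_⟩
  have : ι x = χ := hj hx
  exact congrArg (fun f : G →+ AddCircle (1 : ℚ) => f y) this

/-- Generic content of Lemma 5.5: for a nondegenerate bilinear pairing on a finite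
abelian group, an endomorphism `φ` and a commuting automorphism `u` with
`B (φ x) y = B x (u (φ y))`, the annihilator of `ker (φ^m)` inside `ker (φ^n)`
equals `φ^m (ker (φ^(m+n)))`. -/
theorem stmt_3 {G : Type*} [AddCommGroup G] [Finite G]
    (B : G → G → AddCircle (1 : ℚ))
    (hBl : ∀ x x' y : G, B (x + x') y = B x y + B x' y)
    (hBr : ∀ x y y' : G, B x (y + y') = B x y + B x y')
    (hndl : ∀ x : G, (∀ y : G, B x y = 0) → x = 0)
    (hndr : ∀ y : G, (∀ x : G, B x y = 0) → y = 0)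
    (φ : AddMonoid.End G) (u : G ≃+ G)
    (hcomm : ∀ x : G, φ (u x) = u (φ x))
    (hadj : ∀ x y : G, B (φ x) y = B x (u (φ y)))
    (m n : ℕ) (hm : 0 < m) (hn : 0 < n) :
    {y : G | (φ ^ n) y = 0 ∧ ∀ x : G, (φ ^ m) x = 0 → B x y = 0}
      = ⇑(φ ^ m) '' {y : G | (φ ^ (m + n)) y = 0} := by
  classical
  -- basic facts
  have hB0l : ∀ y : G, B 0 y = 0 := by
    intro y
    have h := hBl 0 0 y
    rw [add_zero] at h
    exact right_eq_add.mp h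
  have hpow_apply : ∀ (a b : ℕ) (x : G), (φ ^ (a + b)) x = (φ ^ a) ((φ ^ b) x) := by
    intro a b x
    rw [pow_add]
    rfl
  have hstep : ∀ (k : ℕ) (t : G), (φ ^ (k + 1)) t = φ ((φ ^ k) t) := by
    intro k t
    rw [Nat.add_comm, hpow_apply 1 k t, pow_one]
  have hstep' : ∀ (k : ℕ) (t : G), (φ ^ (k + 1)) t = (φ ^ k) (φ t) := by
    intro k t
    rw [hpow_apply k 1 t, pow_one]
  -- `u` commutes with all powers of `φ`
  have hcommpow : ∀ (k : ℕ) (x : G), (φ ^ k) (u x) = u ((φ ^ k) x) := by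
    intro k
    induction k with
    | zero => intro x; simp [AddMonoid.End.one_apply]
    | succ k ih =>
      intro x
      rw [hstep' k (u x), hstep' k x, hcomm x, ih (φ x)]
  -- adjunction for powers
  have key : ∀ (k : ℕ) (x y : G), B ((φ ^ k) x) y = B x ((φ ^ k) ((⇑u)^[k] y)) := by
    intro k
    induction k with
    | zero => intro x y; simp [AddMonoid.End.one_apply]
    | succ k ih =>
      intro x y
      calc B ((φ ^ (k + 1)) x) y = B ((φ ^ k) (φ x)) y := by rw [hstep']
        _ = B (φ x) ((φ ^ k) ((⇑u)^[k] y)) := ih (φ x) y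
        _ = B x (u (φ ((φ ^ k) ((⇑u)^[k] y)))) := hadj x _
        _ = B x ((φ ^ (k + 1)) ((⇑u)^[k + 1] y)) := by
              rw [Function.iterate_succ_apply', hcommpow (k + 1), hstep]
  ext y
  simp only [Set.mem_setOf_eq, Set.mem_image]
  constructor
  · rintro ⟨hy1, hy2⟩
    -- first, `y` is in the range of `φ^m`
    have hyr : ∃ z : G, (φ ^ m) z = y := by
      by_contra hc
      push_neg at hc
      set H : AddSubgroup G := AddMonoidHom.range (φ ^ m : AddMonoid.End G) with hH
      have hquot : (QuotientAddGroup.mk' H) y ≠ 0 := by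
        intro h0
        rw [QuotientAddGroup.mk'_apply, QuotientAddGroup.eq_zero_iff] at h0
        obtain ⟨z, hz⟩ := h0
        exact hc z hz
      obtain ⟨c, hc0⟩ := CharacterModule.exists_character_apply_ne_zero_of_ne_zero hquot
      set χ : G →+ AddCircle (1 : ℚ) :=
        (c : (G ⧸ H) →+ AddCircle (1 : ℚ)).comp (QuotientAddGroup.mk' H) with hχ
      obtain ⟨x, hx⟩ := pairing_surjective B hBl hBr hndl χ
      have hker : (φ ^ m) x = 0 := by
        apply hndl
        intro w
        rw [key m x w, hx]
        have hmem : (QuotientAddGroup.mk' H) ((φ ^ m) ((⇑u)^[m] w)) = 0 := by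
          rw [QuotientAddGroup.mk'_apply, QuotientAddGroup.eq_zero_iff]
          exact ⟨(⇑u)^[m] w, rfl⟩
        show c ((QuotientAddGroup.mk' H) ((φ ^ m) ((⇑u)^[m] w))) = 0
        rw [hmem, map_zero]
      have hby := hy2 x hker
      rw [hx y] at hby
      exact hc0 hby
    obtain ⟨z, hz⟩ := hyr
    refine ⟨z, ?_, hz⟩
    show (φ ^ (m + n)) z = 0
    rw [Nat.add_comm, hpow_apply n m z, hz]
    exact hy1
  · rintro ⟨z, hz, rfl⟩
    constructor
    · show (φ ^ n) ((φ ^ m) z) = 0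
      rw [← hpow_apply n m z, Nat.add_comm]
      exact hz
    · intro x hx
      have hiter : (⇑u)^[m] ((⇑u.symm)^[m] z) = z :=
        (Function.LeftInverse.iterate u.apply_symm_apply m) z
      calc B x ((φ ^ m) z) = B x ((φ ^ m) ((⇑u)^[m] ((⇑u.symm)^[m] z))) := by rw [hiter]
        _ = B ((φ ^ m) x) ((⇑u.symm)^[m] z) := (key m x _).symm
        _ = 0 := by rw [hx]; exact hB0l _
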